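/- arXiv:1408.5599 — 6 statements merged into one kernel-verified Lean document; each statement's English description precedes it below -/
import Mathlib

section
/- For any point x in a compact metric space, the complement of the smallest closed forward-invariant set containing x equals the largest open set not accessible from x. -/
open MeasureTheory Filter Topology

section Aux

variable {X : Type*} [MetricSpace X] [CompactSpace X] [MeasurableSpace X] [BorelSpace X]

/-- Continuous approximations to the indicator of an open set. -/
noncomputable def approxInd (U : Set X) (n : ℕ) (z : X) : ℝ :=
  min 1 (n * Metric.infDist z Uᶜ)

lemma approxInd_continuous (U : Set X) (n : ℕ) : Continuous (approxInd U n) :=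
  continuous_const.min (continuous_const.mul (Metric.continuous_infDist_pt _))

lemma approxInd_nonneg (U : Set X) (n : ℕ) (z : X) : 0 ≤ approxInd U n z :=
  le_min zero_le_one (mul_nonneg (Nat.cast_nonneg n) Metric.infDist_nonneg)

lemma approxInd_le_one (U : Set X) (n : ℕ) (z : X) : approxInd U n z ≤ 1 :=
  min_le_left _ _

lemma approxInd_monotone (U : Set X) :
    Monotone (fun n z => ENNReal.ofReal (approxInd U n z)) := by
  intro n m hnm
  intro z
  apply ENNReal.ofReal_le_ofReal
  exact min_le_min le_rfl
    (mul_le_mul_of_nonneg_right (Nat.cast_le.mpr hnm) Metric.infDist_nonneg)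

lemma approxInd_iSup (U : Set X) (hU : IsOpen U) (hne : Uᶜ.Nonempty) (z : X) :
    (⨆ n : ℕ, ENNReal.ofReal (approxInd U n z)) = U.indicator 1 z := by
  by_cases hz : z ∈ U
  · have hd : 0 < Metric.infDist z Uᶜ :=
      (hU.isClosed_compl.notMem_iff_infDist_pos hne).1 (by simpa using hz)
    rw [Set.indicator_of_mem hz]
    apply le_antisymm
    · exact iSup_le fun n => by
        simpa using ENNReal.ofReal_le_ofReal (approxInd_le_one U n z)
    · refine le_iSup_of_le ⌈(Metric.infDist z Uᶜ)⁻¹⌉₊ ?_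
      have h1 : (1 : ℝ) ≤ (⌈(Metric.infDist z Uᶜ)⁻¹⌉₊ : ℝ) * Metric.infDist z Uᶜ := by
        rw [← div_le_iff₀ hd] at *
        calc (1 : ℝ) / Metric.infDist z Uᶜ = (Metric.infDist z Uᶜ)⁻¹ := one_div _
          _ ≤ ⌈(Metric.infDist z Uᶜ)⁻¹⌉₊ := Nat.le_ceil _
      have : approxInd U ⌈(Metric.infDist z Uᶜ)⁻¹⌉₊ z = 1 := min_eq_left h1
      simp [this]
  · have hz' : Metric.infDist z Uᶜ = 0 := Metric.infDist_zero_of_mem (by simpa using hz)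
    rw [Set.indicator_of_notMem hz]
    simp [approxInd, hz']

/-- The measure of an open set as a sup of integrals of continuous functions. -/
lemma measure_open_eq_iSup (U : Set X) (hU : IsOpen U) (hne : Uᶜ.Nonempty)
    (μ : Measure X) [IsProbabilityMeasure μ] :
    μ U = ⨆ n : ℕ, ENNReal.ofReal (∫ z, approxInd U n z ∂μ) := by
  have hint : ∀ n, Integrable (approxInd U n) μ :=
    fun n => (approxInd_continuous U n).integrable_of_hasCompactSupport
      (HasCompactSupport.of_compactSpace _)
  have h1 : ∀ n, ENNReal.ofReal (∫ z, approxInd U n z ∂μ)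
      = ∫⁻ z, ENNReal.ofReal (approxInd U n z) ∂μ := fun n =>
    MeasureTheory.ofReal_integral_eq_lintegral_ofReal (hint n)
      (ae_of_all _ (approxInd_nonneg U n))
  simp_rw [h1]
  rw [← MeasureTheory.lintegral_iSup
      (fun n => ((approxInd_continuous U n).measurable).ennreal_ofReal)
      (approxInd_monotone U)]
  simp_rw [approxInd_iSup U hU hne]
  exact (MeasureTheory.lintegral_indicator_one hU.measurableSet).symm

end Aux

/-- For any point `x` in a compact metric space with a Markovian family of transition
probabilities, the complement of the smallest closed forward-invariant set containing `x`
equals the largest open set not accessible from `x` (i.e. the union of all open sets not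
accessible from `x`). -/
theorem stmt1 {X : Type*} [MetricSpace X] [CompactSpace X]
    [MeasurableSpace X] [BorelSpace X]
    (P : X → ℕ → Measure X) (hprob : ∀ x t, IsProbabilityMeasure (P x t))
    (hcont : ∀ t (f : X → ℝ), Continuous f →
      Continuous fun x => ∫ y, f y ∂(P x t))
    (hP0 : ∀ x (A : Set X), MeasurableSet A → P x 0 A = Set.indicator A 1 x)
    (hCK : ∀ x s t (A : Set X), MeasurableSet A →
      P x (s + t) A = ∫⁻ y, P y t A ∂(P x s))
    (x : X) :
    (⋂₀ {K : Set X | IsClosed K ∧ x ∈ K ∧ ∀ y ∈ K, ∀ t, P y t K = 1})ᶜ =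
      ⋃₀ {U : Set X | IsOpen U ∧ ¬ ∃ t, 0 < P x t U} := by
  have := hprob
  ext z
  simp only [Set.mem_compl_iff, Set.mem_sInter, Set.mem_sUnion, Set.mem_setOf_eq, not_forall]
  constructor
  · rintro ⟨K, ⟨hKc, hxK, hKinv⟩, hzK⟩
    refine ⟨Kᶜ, ⟨hKc.isOpen_compl, ?_⟩, hzK⟩
    rintro ⟨t, ht⟩
    have : P x t Kᶜ = 0 := by
      have := hprob x t
      rw [prob_compl_eq_zero_iff hKc.measurableSet]
      exact hKinv x hxK t
    simp [this] at ht
  · rintro ⟨U, ⟨hUo, hUna⟩, hzU⟩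
    push_neg at hUna
    have hUna' : ∀ t, P x t U = 0 := fun t => le_antisymm (hUna t) zero_le
    -- x ∉ U, so Uᶜ is nonempty
    have hxU : x ∉ U := by
      intro hx
      have h0 := hP0 x U hUo.measurableSet
      rw [hUna' 0, Set.indicator_of_mem hx] at h0
      simp at h0
    have hne : Uᶜ.Nonempty := ⟨x, hxU⟩
    -- key representation of y ↦ P y t U
    have hrep : ∀ t y, P y t U = ⨆ n : ℕ, ENNReal.ofReal (∫ w, approxInd U n w ∂(P y t)) :=
      fun t y => measure_open_eq_iSup U hUo hne (P y t)
    -- measurability of y ↦ P y t U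
    have hmeas : ∀ t, Measurable (fun y => P y t U) := by
      intro t
      have : (fun y => P y t U)
          = fun y => ⨆ n : ℕ, ENNReal.ofReal (∫ w, approxInd U n w ∂(P y t)) := by
        funext y; exact hrep t y
      rw [this]
      exact Measurable.iSup fun n =>
        (hcont t _ (approxInd_continuous U n)).measurable.ennreal_ofReal
    -- K = points from which U is not accessible
    set K : Set X := {y | ∀ t, P y t U = 0} with hK
    -- K is closed
    have hKclosed : IsClosed K := by
      have : K = ⋂ t : ℕ, ⋂ n : ℕ, {y | ∫ w, approxInd U n w ∂(P y t) ≤ 0} := by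
        ext y
        simp only [hK, Set.mem_setOf_eq, Set.mem_iInter]
        constructor
        · intro h t n
          have hr := hrep t y
          rw [h t] at hr
          have hle := le_iSup (fun n : ℕ => ENNReal.ofReal (∫ w, approxInd U n w ∂(P y t))) n
          rw [← hr] at hle
          exact ENNReal.ofReal_eq_zero.mp (le_antisymm hle zero_le)
        · intro h t
          rw [hrep t y]
          simp only [ENNReal.iSup_eq_zero, ENNReal.ofReal_eq_zero]
          exact fun n => h t n
      rw [this]
      exact isClosed_iInter fun t => isClosed_iInter fun n =>
        isClosed_le (hcont t _ (approxInd_continuous U n)) continuous_const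
    -- K contains x, z ∉ K
    have hzK : z ∉ K := by
      intro hzK
      have h0 := hP0 z U hUo.measurableSet
      rw [hzK 0, Set.indicator_of_mem hzU] at h0
      simp at h0
    -- forward invariance
    have hKinv : ∀ y ∈ K, ∀ t, P y t K = 1 := by
      intro y hy t
      have := hprob y t
      rw [← prob_compl_eq_zero_iff hKclosed.measurableSet]
      have hKc : Kᶜ = ⋃ s : ℕ, {w | P w s U ≠ 0} := by
        ext w
        simp [hK, Set.mem_iUnion]
      rw [hKc]
      refine le_antisymm (le_trans (measure_iUnion_le _) ?_) zero_le
      have hzero : ∀ s : ℕ, P y t {w | P w s U ≠ 0} = 0 := by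
        intro s
        have hCKys := hCK y t s U hUo.measurableSet
        rw [hy (t + s)] at hCKys
        have hae := (lintegral_eq_zero_iff (hmeas s)).mp hCKys.symm
        rw [Filter.EventuallyEq, ae_iff] at hae
        simpa using hae
      simp [hzero]
    exact ⟨K, ⟨hKclosed, fun t => hUna' t, hKinv⟩, hzK⟩
end

section
/- For any x, y in X, the image of the smallest closed forward-invariant set (under the two-point motion) containing (x,y) under the first coordinate projection is exactly the smallest closed forward-invariant set containing x. -/
open MeasureTheory ProbabilityTheory Filter Topology

/-- A (discrete-time) filtered random dynamical system over a memoryless stationary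
noise space, on a metric space `X`. -/
structure MRDS (Ω X : Type*) [mΩ : MeasurableSpace Ω] [MetricSpace X]
    [mX : MeasurableSpace X] [BorelSpace X] where
  P : Measure Ω
  hprob : IsProbabilityMeasure P
  F : ℕ → MeasurableSpace Ω
  hle : ∀ t, F t ≤ mΩ
  hmono : Monotone F
  θ : ℕ → Ω → Ω
  hθ0 : θ 0 = id
  hθadd : ∀ s t, θ (s + t) = θ s ∘ θ t
  hθmeas : ∀ s t, @Measurable Ω Ω (F (s + t)) (F s) (θ t)
  hθpres : ∀ t, MeasurePreserving (θ t) P P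
  memless : ∀ s, Indep (F s) ((⨆ t, F t).comap (θ s)) P
  φ : ℕ → Ω → X → X
  hφcont : ∀ t ω, Continuous (φ t ω)
  hφmeas : ∀ t, @Measurable (Ω × X) X ((F t).prod mX) mX (fun p => φ t p.1 p.2)
  hφ0 : ∀ ω, φ 0 ω = id
  hφcocycle : ∀ s t ω, φ (s + t) ω = φ t (θ s ω) ∘ φ s ω

namespace MRDS

variable {Ω X : Type*} [MeasurableSpace Ω] [MetricSpace X]
  [MeasurableSpace X] [BorelSpace X]

/-- The one-point transition probabilities `φ_x^t`. -/
noncomputable def law (R : MRDS Ω X) (x : X) (t : ℕ) : Measure X :=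
  R.P.map (fun ω => R.φ t ω x)

/-- A closed set that is forward-invariant for the one-point transition probabilities. -/
def FwdInv (R : MRDS Ω X) (K : Set X) : Prop :=
  IsClosed K ∧ ∀ x ∈ K, ∀ t, R.law x t K = 1

/-- A minimal set: non-empty, closed, forward-invariant, with no proper non-empty closed
forward-invariant subsets. -/
def Minimal (R : MRDS Ω X) (K : Set X) : Prop :=
  K.Nonempty ∧ R.FwdInv K ∧ ∀ K' ⊆ K, R.FwdInv K' → K' = K ∨ K' = ∅

/-- `A` contracts under the noise realisation `ω`. -/
def contracts (R : MRDS Ω X) (ω : Ω) (A : Set X) : Prop :=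
  Tendsto (fun t => EMetric.diam (R.φ t ω '' A)) atTop (𝓝 0)

/-- `(ω, x)` is an asymptotically stable pair. -/
def stablePair (R : MRDS Ω X) (ω : Ω) (x : X) : Prop :=
  ∃ U ∈ 𝓝 x, R.contracts ω U

/-- The set of asymptotically stable pairs. -/
def O (R : MRDS Ω X) : Set (Ω × X) := {p | R.stablePair p.1 p.2}

/-- The set of noise realisations under which `U` contracts. -/
def EU (R : MRDS Ω X) (U : Set X) : Set Ω := {ω | R.contracts ω U}

/-- `x` is potentially stable. -/
def potStable (R : MRDS Ω X) (x : X) : Prop := 0 < R.P {ω | R.stablePair ω x}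

/-- `x` is almost surely stable. -/
def asStable (R : MRDS Ω X) (x : X) : Prop := R.P {ω | R.stablePair ω x} = 1

/-- `φ` is globally synchronising. -/
def synchronising (R : MRDS Ω X) : Prop :=
  ∀ x y : X,
    R.P {ω | Tendsto (fun t => dist (R.φ t ω x) (R.φ t ω y)) atTop (𝓝 0)} = 1

/-- `φ` is stably synchronising. -/
def stablySynchronising (R : MRDS Ω X) : Prop :=
  R.synchronising ∧ ∀ x : X, R.asStable x

/-- `ρ` is a stationary measure for the one-point transition probabilities. -/
def stationary (R : MRDS Ω X) (ρ : Measure X) : Prop :=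
  ∀ t, ∀ A : Set X, MeasurableSet A → ∫⁻ x, R.law x t A ∂ρ = ρ A

end MRDS

/-- The first-coordinate projection of the smallest closed set containing `(x,y)` that is
almost-surely forward-invariant under the two-point motion is the smallest closed set
containing `x` that is almost-surely forward-invariant under `φ`. -/
theorem stmt2 {Ω X : Type*} [MeasurableSpace Ω] [MetricSpace X] [CompactSpace X]
    [MeasurableSpace X] [BorelSpace X] (R : MRDS Ω X) (x y : X) :
    Prod.fst '' (⋂₀ {C : Set (X × X) | IsClosed C ∧ (x, y) ∈ C ∧
        R.P {ω | ∀ t, (fun p : X × X => (R.φ t ω p.1, R.φ t ω p.2)) '' C ⊆ C} = 1}) =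
      ⋂₀ {K : Set X | IsClosed K ∧ x ∈ K ∧
        R.P {ω | ∀ t, R.φ t ω '' K ⊆ K} = 1} := by
  classical
  haveI := R.hprob
  set S : Set (Set (X × X)) := {C : Set (X × X) | IsClosed C ∧ (x, y) ∈ C ∧
      R.P {ω | ∀ t, (fun p : X × X => (R.φ t ω p.1, R.φ t ω p.2)) '' C ⊆ C} = 1} with hSdef
  set G : Set (X × X) := ⋂₀ S with hGdef
  have hxyG : (x, y) ∈ G := fun C hC => hC.2.1
  -- measurability of the point maps
  have hm : ∀ (t : ℕ) (z : X), Measurable (fun ω => R.φ t ω z) := by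
    intro t z
    exact (R.hφmeas t).comp ((measurable_id'' (R.hle t)).prodMk measurable_const)
  -- the invariance event of a closed set is measurable
  have hBmeas : ∀ C ∈ S, MeasurableSet
      {ω | ∀ t, (fun p : X × X => (R.φ t ω p.1, R.φ t ω p.2)) '' C ⊆ C} := by
    intro C hC
    obtain ⟨D, hDC, hDcount, hDdense⟩ :=
      (TopologicalSpace.IsSeparable.of_separableSpace C).exists_countable_dense_subset
    have hkey : {ω | ∀ t, (fun p : X × X => (R.φ t ω p.1, R.φ t ω p.2)) '' C ⊆ C}
        = ⋂ t, ⋂ p ∈ D, {ω | (R.φ t ω p.1, R.φ t ω p.2) ∈ C} := by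
      ext ω
      simp only [Set.mem_setOf_eq, Set.mem_iInter]
      constructor
      · intro h t p hp
        exact h t (Set.mem_image_of_mem _ (hDC hp))
      · intro h t
        rintro _ ⟨q, hq, rfl⟩
        have hcont : Continuous (fun p : X × X => (R.φ t ω p.1, R.φ t ω p.2)) :=
          ((R.hφcont t ω).comp continuous_fst).prodMk ((R.hφcont t ω).comp continuous_snd)
        have h1 : (fun p : X × X => (R.φ t ω p.1, R.φ t ω p.2)) q ∈
            closure ((fun p : X × X => (R.φ t ω p.1, R.φ t ω p.2)) '' D) :=
          image_closure_subset_closure_image hcont (Set.mem_image_of_mem _ (hDdense hq))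
        have h2 : (fun p : X × X => (R.φ t ω p.1, R.φ t ω p.2)) '' D ⊆ C := by
          rintro _ ⟨p, hp, rfl⟩; exact h t p hp
        have := (closure_mono h2) h1
        rwa [hC.1.closure_eq] at this
    rw [hkey]
    refine MeasurableSet.iInter fun t => MeasurableSet.biInter hDcount fun p _ => ?_
    exact ((hm t p.1).prodMk (hm t p.2)) hC.1.measurableSet
  -- countable subfamily with the same intersection
  obtain ⟨T, hTcount, hTU⟩ := TopologicalSpace.isOpen_iUnion_countable
    (fun C : S => (↑C : Set (X × X))ᶜ) (fun C => C.2.1.isOpen_compl)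
  have hGT : G = ⋂ C ∈ T, (↑C : Set (X × X)) := by
    have : (⋃ C ∈ T, (↑C : Set (X × X))ᶜ)ᶜ = (⋃ C : S, (↑C : Set (X × X))ᶜ)ᶜ := by
      rw [hTU]
    simp only [Set.compl_iUnion, compl_compl] at this
    rw [hGdef, Set.sInter_eq_iInter, ← this]
  -- the invariance event of G has full measure
  have hGinv : R.P {ω | ∀ t, (fun p : X × X => (R.φ t ω p.1, R.φ t ω p.2)) '' G ⊆ G} = 1 := by
    refine le_antisymm prob_le_one ?_
    have hsub : (⋂ C ∈ T, {ω | ∀ t,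
        (fun p : X × X => (R.φ t ω p.1, R.φ t ω p.2)) '' (↑C : Set (X × X)) ⊆ ↑C}) ⊆
        {ω | ∀ t, (fun p : X × X => (R.φ t ω p.1, R.φ t ω p.2)) '' G ⊆ G} := by
      intro ω hω
      simp only [Set.mem_iInter, Set.mem_setOf_eq] at hω ⊢
      intro t
      rintro _ ⟨q, hq, rfl⟩
      rw [hGT] at hq ⊢
      simp only [Set.mem_iInter] at hq ⊢
      intro C hC
      exact hω C hC t (Set.mem_image_of_mem _ (hq C hC))
    refine le_trans ?_ (measure_mono hsub)
    have hfull : R.P (⋂ C ∈ T, {ω | ∀ t,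
        (fun p : X × X => (R.φ t ω p.1, R.φ t ω p.2)) '' (↑C : Set (X × X)) ⊆ ↑C}) = 1 := by
      have hmeas : MeasurableSet (⋂ C ∈ T, {ω | ∀ t,
          (fun p : X × X => (R.φ t ω p.1, R.φ t ω p.2)) '' (↑C : Set (X × X)) ⊆ ↑C}) :=
        MeasurableSet.biInter hTcount fun C _ => hBmeas _ C.2
      rw [← prob_compl_eq_zero_iff hmeas, Set.compl_iInter₂]
      refine (measure_biUnion_null_iff hTcount).2 fun C _ => ?_
      rw [prob_compl_eq_zero_iff (hBmeas _ C.2)]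
      exact C.2.2.2
    rw [hfull]
  apply Set.Subset.antisymm
  · rintro _ ⟨q, hq, rfl⟩ K hK
    have hKS : K ×ˢ (Set.univ : Set X) ∈ S := by
      refine ⟨hK.1.prod isClosed_univ, ⟨hK.2.1, trivial⟩, ?_⟩
      refine le_antisymm prob_le_one ?_
      rw [← hK.2.2]
      apply measure_mono
      rintro ω hω t _ ⟨p, hp, rfl⟩
      exact ⟨hω t (Set.mem_image_of_mem _ hp.1), trivial⟩
    exact (hq _ hKS).1
  · intro z hz
    refine hz (Prod.fst '' G) ⟨?_, ⟨(x, y), hxyG, rfl⟩, ?_⟩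
    · exact (((isClosed_sInter fun C hC => hC.1).isCompact).image continuous_fst).isClosed
    · refine le_antisymm prob_le_one ?_
      rw [← hGinv]
      apply measure_mono
      intro ω hω
      simp only [Set.mem_setOf_eq] at hω ⊢
      intro t
      rintro _ ⟨_, ⟨q, hq, rfl⟩, rfl⟩
      exact ⟨_, hω t (Set.mem_image_of_mem _ hq), rfl⟩
end

section
/- Let K be a compact subset of X possessing no non-empty closed forward-invariant subsets. Then for any x ∈ X, almost surely there exists an unbounded sequence of times (t_n) such that φ(t_n,ω)x ∉ K for all n. -/
open MeasureTheory ProbabilityTheory Filter Topology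

section Aux

open MeasureTheory ProbabilityTheory Filter Topology
open scoped ENNReal

variable {Ω X : Type*} [MeasurableSpace Ω] [MetricSpace X]
  [MeasurableSpace X] [BorelSpace X]

/-- Type synonym for `Ω` with the σ-algebra `R.F m`. -/
def MPast (R : MRDS Ω X) (m : ℕ) : Type _ := Ω

@[reducible] instance instMeasMPast (R : MRDS Ω X) (m : ℕ) : MeasurableSpace (MPast R m) := R.F m

/-- Type synonym for `Ω` with the σ-algebra `⨆ t, R.F t`. -/
def MFut (R : MRDS Ω X) : Type _ := Ω

@[reducible] instance instMeasMFut (R : MRDS Ω X) : MeasurableSpace (MFut R) := ⨆ t, R.F t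

namespace MRDS

variable (R : MRDS Ω X)

lemma hle' : (⨆ t, R.F t) ≤ ‹MeasurableSpace Ω› := iSup_le R.hle

lemma measurable_toPast (m : ℕ) : @Measurable Ω (MPast R m) _ _ (fun ω => ω) :=
  fun s hs => R.hle m s hs

lemma measurable_toFut (m : ℕ) : @Measurable Ω (MFut R) _ _ (R.θ m) := by
  refine measurable_iff_comap_le.mpr ?_
  show MeasurableSpace.comap (R.θ m) (⨆ t, R.F t) ≤ _
  rw [MeasurableSpace.comap_iSup]
  exact iSup_le fun t =>
    le_trans (measurable_iff_comap_le.mp (R.hθmeas t m)) (R.hle (t + m))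

lemma measurable_phiPast (t : ℕ) (x : X) :
    Measurable (fun ω : MPast R t => R.φ t ω x) := by
  have h : Measurable (fun p : MPast R t × X => R.φ t p.1 p.2) := R.hφmeas t
  exact h.comp (measurable_id.prodMk measurable_const)

lemma measurable_phiOm (t : ℕ) (x : X) :
    Measurable (fun ω : Ω => R.φ t ω x) :=
  (R.measurable_phiPast t x).mono (R.hle t) le_rfl

lemma measurable_phiFut (t : ℕ) :
    Measurable (fun p : MFut R × X => R.φ t p.1 p.2) := by
  have hmono : MeasurableSpace.prod (R.F t) ‹MeasurableSpace X›
      ≤ MeasurableSpace.prod (⨆ s, R.F s) ‹MeasurableSpace X› :=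
    sup_le_sup (MeasurableSpace.comap_mono (le_iSup R.F t)) le_rfl
  exact (R.hφmeas t).mono hmono le_rfl

lemma measurable_phiProd (t : ℕ) :
    Measurable (fun p : Ω × X => R.φ t p.1 p.2) := by
  have hmono : MeasurableSpace.prod (R.F t) ‹MeasurableSpace X›
      ≤ MeasurableSpace.prod ‹MeasurableSpace Ω› ‹MeasurableSpace X› :=
    sup_le_sup (MeasurableSpace.comap_mono (R.hle t)) le_rfl
  exact (R.hφmeas t).mono hmono le_rfl

lemma measurable_hit (t : ℕ) (x : X) {A : Set X} (hA : MeasurableSet A) :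
    MeasurableSet {ω : Ω | R.φ t ω x ∈ A} :=
  (R.measurable_phiOm t x) hA

lemma law_eq (x : X) (t : ℕ) {A : Set X} (hA : MeasurableSet A) :
    R.law x t A = R.P {ω | R.φ t ω x ∈ A} :=
  Measure.map_apply (R.measurable_phiOm t x) hA

lemma law_le_one (x : X) (t : ℕ) (A : Set X) : R.law x t A ≤ 1 := by
  haveI := R.hprob
  refine le_trans (measure_mono (Set.subset_univ A)) ?_
  rw [law, Measure.map_apply (R.measurable_phiOm t x) MeasurableSet.univ]
  simp

lemma law_lintegral (x : X) (t : ℕ) {A : Set X} (hA : MeasurableSet A) :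
    R.law x t A = ∫⁻ ω, A.indicator 1 (R.φ t ω x) ∂ R.P := by
  rw [R.law_eq x t hA, ← lintegral_indicator_one (R.measurable_hit t x hA)]
  refine lintegral_congr fun ω => ?_
  by_cases h : R.φ t ω x ∈ A <;>
    simp [Set.indicator_apply, h, Set.mem_setOf_eq]

end MRDS

end Aux

section Aux2

open MeasureTheory ProbabilityTheory Filter Topology
open scoped ENNReal

variable {Ω X : Type*} [MeasurableSpace Ω] [MetricSpace X]
  [MeasurableSpace X] [BorelSpace X]

namespace MRDS

variable (R : MRDS Ω X)

lemma trim_prob {α : Type*} {mα m' : MeasurableSpace α} (P : @Measure α mα)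
    [IsProbabilityMeasure P] (hm' : m' ≤ mα) :
    IsProbabilityMeasure (P.trim hm') := by
  refine ⟨?_⟩
  rw [trim_measurableSet_eq hm' MeasurableSet.univ]
  exact measure_univ

lemma markov_master (m : ℕ) (H : MPast R m × MFut R → ℝ≥0∞) (hH : Measurable H) :
    ∫⁻ ω, H (ω, R.θ m ω) ∂ R.P = ∫⁻ ω₁, ∫⁻ ω₂, H (ω₁, ω₂) ∂ R.P ∂ R.P := by
  haveI := R.hprob
  have h1 : R.F m ≤ ‹MeasurableSpace Ω› := R.hle m
  have h2 : (⨆ t, R.F t) ≤ ‹MeasurableSpace Ω› := R.hle'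
  set P1 : Measure (MPast R m) := R.P.trim h1 with hP1
  set P2 : Measure (MFut R) := R.P.trim h2 with hP2
  haveI : IsProbabilityMeasure P1 := trim_prob R.P h1
  haveI : IsProbabilityMeasure P2 := trim_prob R.P h2
  set Ψ : Ω → MPast R m × MFut R := fun ω => (ω, R.θ m ω) with hΨdef
  have hΨ : Measurable Ψ := (R.measurable_toPast m).prodMk (R.measurable_toFut m)
  have key : R.P.map Ψ = P1.prod P2 := by
    refine (Measure.prod_eq ?_).symm
    intro s t hs ht
    rw [Measure.map_apply hΨ (hs.prod ht)]
    have hpre : Ψ ⁻¹' (s ×ˢ t) = s ∩ R.θ m ⁻¹' t := rfl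
    rw [hpre]
    have hind := (Indep_iff _ _ _).mp (R.memless m) s (R.θ m ⁻¹' t) hs ⟨t, ht, rfl⟩
    have e1 : P1 s = R.P s := trim_measurableSet_eq h1 hs
    have e2 : P2 t = R.P t := trim_measurableSet_eq h2 ht
    refine hind.trans ?_
    rw [(R.hθpres m).measure_preimage (h2 t ht).nullMeasurableSet, e1, e2]
  set G : MPast R m → ℝ≥0∞ := fun ω₁ => ∫⁻ ω₂, H (ω₁, ω₂) ∂P2 with hGdef
  have hG : Measurable G := Measurable.lintegral_prod_right hH
  have hGae : ∀ ω₁ : Ω, G ω₁ = ∫⁻ ω₂, H (ω₁, ω₂) ∂ R.P := fun ω₁ =>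
    lintegral_trim h2 (hH.comp measurable_prodMk_left)
  calc ∫⁻ ω, H (ω, R.θ m ω) ∂ R.P = ∫⁻ ω, H (Ψ ω) ∂ R.P := rfl
    _ = ∫⁻ p, H p ∂(R.P.map Ψ) := (lintegral_map hH hΨ).symm
    _ = ∫⁻ p, H p ∂(P1.prod P2) := by rw [key]
    _ = ∫⁻ ω₁, G ω₁ ∂P1 := lintegral_prod _ hH.aemeasurable
    _ = ∫⁻ ω₁, G ω₁ ∂ R.P := lintegral_trim h1 hG
    _ = ∫⁻ ω₁, ∫⁻ ω₂, H (ω₁, ω₂) ∂ R.P ∂ R.P := lintegral_congr hGae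

end MRDS

end Aux2

section Aux3

open MeasureTheory ProbabilityTheory Filter Topology
open scoped ENNReal

variable {Ω X : Type*} [MeasurableSpace Ω] [MetricSpace X]
  [MeasurableSpace X] [BorelSpace X]

namespace MRDS

variable (R : MRDS Ω X)

lemma measurable_pairmap (m t : ℕ) (x : X) :
    Measurable (fun q : MPast R m × MFut R => R.φ t q.2 (R.φ m q.1 x)) :=
  (R.measurable_phiFut t).comp
    (measurable_snd.prodMk ((R.measurable_phiPast m x).comp measurable_fst))

lemma law_comp (x : X) (m t : ℕ) {A : Set X} (hA : MeasurableSet A) :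
    R.law x (m + t) A = ∫⁻ ω, R.law (R.φ m ω x) t A ∂ R.P := by
  haveI := R.hprob
  set W : Set (MPast R m × MFut R) := {q | R.φ t q.2 (R.φ m q.1 x) ∈ A} with hWdef
  have hWmeas : MeasurableSet W := (R.measurable_pairmap m t x) hA
  set H : MPast R m × MFut R → ℝ≥0∞ := fun p => W.indicator 1 p with hHdef
  have hH : Measurable H := measurable_const.indicator hWmeas
  have hmaster := R.markov_master m H hH
  have hleft : ∫⁻ ω, H (ω, R.θ m ω) ∂ R.P = R.law x (m + t) A := by
    have hpt : ∀ ω : Ω, H (ω, R.θ m ω) = ({ω' : Ω | R.φ (m + t) ω' x ∈ A}).indicator 1 ω := by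
      intro ω
      have hiff : R.φ t (R.θ m ω) (R.φ m ω x) ∈ A ↔ R.φ (m + t) ω x ∈ A := by
        rw [R.hφcocycle m t ω]; rfl
      by_cases h : R.φ (m + t) ω x ∈ A <;>
        simp [hHdef, hWdef, Set.indicator_apply, Set.mem_setOf_eq, hiff, h]
    rw [lintegral_congr hpt, lintegral_indicator_one (R.measurable_hit (m + t) x hA),
      R.law_eq x (m + t) hA]
  have hright : ∀ ω₁ : Ω, ∫⁻ ω₂, H (ω₁, ω₂) ∂ R.P = R.law (R.φ m ω₁ x) t A := by
    intro ω₁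
    have hpt : ∀ ω₂ : Ω, H (ω₁, ω₂) = ({ω₂ : Ω | R.φ t ω₂ (R.φ m ω₁ x) ∈ A}).indicator 1 ω₂ := by
      intro ω₂
      by_cases h : R.φ t ω₂ (R.φ m ω₁ x) ∈ A <;>
        simp [hHdef, hWdef, Set.indicator_apply, Set.mem_setOf_eq, h]
    rw [lintegral_congr hpt, lintegral_indicator_one (R.measurable_hit t _ hA),
      R.law_eq _ t hA]
  rw [← hleft, hmaster]
  exact lintegral_congr hright

lemma step (x : X) {K : Set X} (hKm : MeasurableSet K) (T : ℕ) (c : ℝ≥0∞)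
    (hunif : ∀ y ∈ K, ∃ t ≤ T, R.law y t K ≤ c)
    (m : ℕ) (A : Set Ω) (hA : MeasurableSet[R.F m] A)
    (hAK : ∀ ω ∈ A, R.φ m ω x ∈ K) :
    R.P (A ∩ {ω | ∀ u ≤ T, R.φ (m + u) ω x ∈ K}) ≤ c * R.P A := by
  haveI := R.hprob
  set W : Set (MPast R m × MFut R) := {q | ∀ u ≤ T, R.φ u q.2 (R.φ m q.1 x) ∈ K} with hWdef
  have hWmeas : MeasurableSet W := by
    have hW : W = ⋂ (u : ℕ) (_ : u ≤ T),
        (fun q : MPast R m × MFut R => R.φ u q.2 (R.φ m q.1 x)) ⁻¹' K := by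
      ext q; simp [hWdef, Set.mem_iInter]
    rw [hW]
    exact MeasurableSet.iInter fun u => MeasurableSet.iInter fun _ =>
      (R.measurable_pairmap m u x) hKm
  have hAmeas : @MeasurableSet (MPast R m) _ A := hA
  set H : MPast R m × MFut R → ℝ≥0∞ := fun p => A.indicator 1 p.1 * W.indicator 1 p with hHdef
  have hH : Measurable H :=
    ((measurable_const.indicator hAmeas).comp measurable_fst).mul
      (measurable_const.indicator hWmeas)
  set S : Set Ω := A ∩ {ω | ∀ u ≤ T, R.φ (m + u) ω x ∈ K} with hSdef
  have hSmeas : MeasurableSet S := by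
    refine (R.hle m A hA).inter ?_
    have hS2 : {ω : Ω | ∀ u ≤ T, R.φ (m + u) ω x ∈ K}
        = ⋂ (u : ℕ) (_ : u ≤ T), (fun ω : Ω => R.φ (m + u) ω x) ⁻¹' K := by
      ext ω; simp [Set.mem_iInter]
    rw [hS2]
    exact MeasurableSet.iInter fun u => MeasurableSet.iInter fun _ =>
      (R.measurable_hit (m + u) x hKm)
  have hpt : ∀ ω : Ω, S.indicator 1 ω = H (ω, R.θ m ω) := by
    intro ω
    have hiff : (∀ u ≤ T, R.φ u (R.θ m ω) (R.φ m ω x) ∈ K) ↔ (∀ u ≤ T, R.φ (m + u) ω x ∈ K) := by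
      refine forall₂_congr fun u hu => ?_
      rw [R.hφcocycle m u ω]; rfl
    show S.indicator 1 ω = A.indicator 1 ω * W.indicator 1 (ω, R.θ m ω)
    by_cases hωA : ω ∈ A
    · by_cases hωW : ∀ u ≤ T, R.φ (m + u) ω x ∈ K
      · have h1 : ω ∈ S := ⟨hωA, hωW⟩
        have h2 : (⟨ω, R.θ m ω⟩ : MPast R m × MFut R) ∈ W := hiff.mpr hωW
        rw [Set.indicator_of_mem h1, Set.indicator_of_mem hωA, Set.indicator_of_mem h2]
        simp
      · have h1 : ω ∉ S := fun hS => hωW hS.2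
        have h2 : (⟨ω, R.θ m ω⟩ : MPast R m × MFut R) ∉ W := fun hw => hωW (hiff.mp hw)
        rw [Set.indicator_of_notMem h1, Set.indicator_of_notMem h2]
        simp
    · have h1 : ω ∉ S := fun hS => hωA hS.1
      rw [Set.indicator_of_notMem h1, Set.indicator_of_notMem hωA]
      simp
  have hbound : ∀ ω₁ : Ω, ∫⁻ ω₂, H (ω₁, ω₂) ∂ R.P ≤ c * A.indicator 1 ω₁ := by
    intro ω₁
    by_cases hω₁ : ω₁ ∈ A
    · obtain ⟨t₀, ht₀T, ht₀c⟩ := hunif _ (hAK ω₁ hω₁)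
      have hmono : ∀ ω₂ : Ω, H (ω₁, ω₂)
          ≤ ({ω₂ : Ω | R.φ t₀ ω₂ (R.φ m ω₁ x) ∈ K}).indicator 1 ω₂ := by
        intro ω₂
        show A.indicator 1 ω₁ * W.indicator 1 (⟨ω₁, ω₂⟩ : MPast R m × MFut R) ≤ _
        by_cases hW2 : (⟨ω₁, ω₂⟩ : MPast R m × MFut R) ∈ W
        · have hmem : ω₂ ∈ {ω₂ : Ω | R.φ t₀ ω₂ (R.φ m ω₁ x) ∈ K} := hW2 t₀ ht₀T
          rw [Set.indicator_of_mem hω₁, Set.indicator_of_mem hW2, Set.indicator_of_mem hmem]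
          simp
        · rw [Set.indicator_of_notMem hW2]
          simp
      calc ∫⁻ ω₂, H (ω₁, ω₂) ∂ R.P
          ≤ ∫⁻ ω₂, ({ω₂ : Ω | R.φ t₀ ω₂ (R.φ m ω₁ x) ∈ K}).indicator 1 ω₂ ∂ R.P :=
            lintegral_mono hmono
        _ = R.P {ω₂ : Ω | R.φ t₀ ω₂ (R.φ m ω₁ x) ∈ K} :=
            lintegral_indicator_one (R.measurable_hit t₀ _ hKm)
        _ = R.law (R.φ m ω₁ x) t₀ K := (R.law_eq _ t₀ hKm).symm
        _ ≤ c := ht₀c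
        _ = c * A.indicator 1 ω₁ := by simp [Set.indicator_of_mem hω₁]
    · have hz : ∀ ω₂ : Ω, H (ω₁, ω₂) = 0 := by
        intro ω₂; simp [hHdef, Set.indicator_of_notMem hω₁]
      simp [lintegral_congr hz, Set.indicator_of_notMem hω₁]
  calc R.P S = ∫⁻ ω, S.indicator 1 ω ∂ R.P := (lintegral_indicator_one hSmeas).symm
    _ = ∫⁻ ω, H (ω, R.θ m ω) ∂ R.P := lintegral_congr hpt
    _ = ∫⁻ ω₁, ∫⁻ ω₂, H (ω₁, ω₂) ∂ R.P ∂ R.P := R.markov_master m H hH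
    _ ≤ ∫⁻ ω₁, c * A.indicator 1 ω₁ ∂ R.P := lintegral_mono hbound
    _ = c * ∫⁻ ω₁, A.indicator 1 ω₁ ∂ R.P :=
        lintegral_const_mul c (measurable_const.indicator (R.hle m A hA))
    _ = c * R.P A := by rw [lintegral_indicator_one (R.hle m A hA)]

end MRDS

end Aux3

section Aux4

open MeasureTheory ProbabilityTheory Filter Topology
open scoped ENNReal

variable {Ω X : Type*} [MeasurableSpace Ω] [MetricSpace X]
  [MeasurableSpace X] [BorelSpace X]

lemma ennind_le_one {α : Type*} {A : Set α} (z : α) : A.indicator (1 : α → ℝ≥0∞) z ≤ 1 :=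
  Set.indicator_le' (fun _ _ => le_rfl) (fun _ _ => zero_le_one) z

namespace MRDS

variable (R : MRDS Ω X)

lemma closed_ge {K : Set X} (hK : IsClosed K) (t : ℕ) (c : ℝ≥0∞) :
    IsClosed {y : X | c ≤ R.law y t K} := by
  haveI := R.hprob
  refine IsSeqClosed.isClosed fun ys y hys hlim => ?_
  set f : ℕ → Ω → ℝ≥0∞ := fun n ω => K.indicator 1 (R.φ t ω (ys n)) with hfdef
  have hfm : ∀ n, Measurable (f n) := fun n =>
    (measurable_const.indicator hK.measurableSet).comp (R.measurable_phiOm t (ys n))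
  have hptw : ∀ ω : Ω, limsup (fun n => f n ω) atTop ≤ K.indicator 1 (R.φ t ω y) := by
    intro ω
    by_cases h : R.φ t ω y ∈ K
    · rw [Set.indicator_of_mem h]
      refine limsup_le_of_le (h := Eventually.of_forall fun n => ?_)
      exact ennind_le_one _
    · have htend : Tendsto (fun n => R.φ t ω (ys n)) atTop (𝓝 (R.φ t ω y)) :=
        ((R.hφcont t ω).continuousAt.tendsto).comp hlim
      have hev : ∀ᶠ n in atTop, R.φ t ω (ys n) ∈ Kᶜ :=
        htend (hK.isOpen_compl.mem_nhds h)
      have hev0 : ∀ᶠ n in atTop, f n ω = (fun _ => (0 : ℝ≥0∞)) n := by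
        filter_upwards [hev] with n hn
        exact Set.indicator_of_notMem hn _
      rw [Set.indicator_of_notMem h, limsup_congr hev0, limsup_const]
  have hc : c ≤ limsup (fun n => R.law (ys n) t K) atTop :=
    le_limsup_of_frequently_le' (Frequently.of_forall hys)
  have heq : (fun n => R.law (ys n) t K) = fun n => ∫⁻ ω, f n ω ∂ R.P :=
    funext fun n => R.law_lintegral (ys n) t hK.measurableSet
  rw [heq] at hc
  have hfatou := limsup_lintegral_le (μ := R.P) (fun _ => (1 : ℝ≥0∞)) hfm
    (fun n => Eventually.of_forall fun ω => ennind_le_one _) (by simp)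
  refine le_trans hc (le_trans hfatou ?_) |>.trans_eq (R.law_lintegral y t hK.measurableSet).symm
  exact lintegral_mono hptw

lemma measurable_law (t : ℕ) {A : Set X} (hA : MeasurableSet A) :
    Measurable fun y : X => R.law y t A := by
  haveI := R.hprob
  have hind : Measurable (A.indicator (1 : X → ℝ≥0∞)) := measurable_one.indicator hA
  have hmap : Measurable fun q : X × Ω => R.φ t q.2 q.1 :=
    (R.measurable_phiProd t).comp (measurable_snd.prodMk measurable_fst)
  have hmeas : Measurable fun q : X × Ω => A.indicator 1 (R.φ t q.2 q.1) := hind.comp hmap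
  have heq : (fun y : X => R.law y t A)
      = fun y : X => ∫⁻ ω, A.indicator 1 (R.φ t ω y) ∂ R.P :=
    funext fun y => R.law_lintegral y t hA
  rw [heq]
  exact Measurable.lintegral_prod_right hmeas

end MRDS

end Aux4

section Aux5

open MeasureTheory ProbabilityTheory Filter Topology
open scoped ENNReal

variable {Ω X : Type*} [MeasurableSpace Ω] [MetricSpace X]
  [MeasurableSpace X] [BorelSpace X]

namespace MRDS

variable (R : MRDS Ω X)

lemma ae_one_of_lintegral_one {f : Ω → ℝ≥0∞} (hf : Measurable f) (hle : ∀ ω, f ω ≤ 1)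
    (hint : ∫⁻ ω, f ω ∂ R.P = 1) : ∀ᵐ ω ∂ R.P, 1 ≤ f ω := by
  haveI := R.hprob
  have hsub : ∫⁻ ω, (1 - f ω) ∂ R.P = 0 := by
    rw [lintegral_sub hf (by rw [hint]; exact ENNReal.one_ne_top) (Eventually.of_forall hle),
      hint, lintegral_one, measure_univ, tsub_self]
  have h0 := (lintegral_eq_zero_iff (measurable_const.sub hf)).mp hsub
  filter_upwards [h0] with ω hω
  exact tsub_eq_zero_iff_le.mp hω

lemma exists_escape {K : Set X} (hK : IsCompact K)
    (hno : ¬ ∃ C ⊆ K, C.Nonempty ∧ R.FwdInv C) :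
    ∀ y ∈ K, ∃ t, R.law y t K < 1 := by
  haveI := R.hprob
  by_contra hcon
  push_neg at hcon
  obtain ⟨y₀, hy₀K, hy₀⟩ := hcon
  set C : Set X := K ∩ ⋂ t : ℕ, {z | 1 ≤ R.law z t K} with hCdef
  have hCclosed : IsClosed C :=
    hK.isClosed.inter (isClosed_iInter fun t => R.closed_ge hK.isClosed t 1)
  have hCne : C.Nonempty := ⟨y₀, hy₀K, Set.mem_iInter.mpr fun t => hy₀ t⟩
  refine hno ⟨C, Set.inter_subset_left, hCne, hCclosed, ?_⟩
  intro z hz m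
  obtain ⟨hzK, hzI⟩ := hz
  have hz1 : ∀ t, R.law z t K = 1 := fun t =>
    le_antisymm (R.law_le_one z t K) (Set.mem_iInter.mp hzI t)
  -- a.e. the image lies in K
  have haeK : ∀ᵐ ω ∂ R.P, R.φ m ω z ∈ K := by
    have h1 : R.P {ω | R.φ m ω z ∈ K} = 1 := by
      rw [← R.law_eq z m hK.isClosed.measurableSet]; exact hz1 m
    have h0 : R.P {ω | R.φ m ω z ∈ K}ᶜ = 0 :=
      (prob_compl_eq_zero_iff (R.measurable_hit m z hK.isClosed.measurableSet)).mpr h1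
    rw [ae_iff]
    exact h0
  -- for each t, a.e. the law of the image assigns full mass to K
  have haet : ∀ t : ℕ, ∀ᵐ ω ∂ R.P, 1 ≤ R.law (R.φ m ω z) t K := by
    intro t
    refine R.ae_one_of_lintegral_one
      ((R.measurable_law t hK.isClosed.measurableSet).comp (R.measurable_phiOm m z))
      (fun ω => R.law_le_one _ t K) ?_
    rw [← R.law_comp z m t hK.isClosed.measurableSet]
    exact hz1 (m + t)
  have hae : ∀ᵐ ω ∂ R.P, R.φ m ω z ∈ C := by
    filter_upwards [haeK, (ae_all_iff).mpr haet] with ω h1 h2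
    exact ⟨h1, Set.mem_iInter.mpr fun t => h2 t⟩
  rw [R.law_eq z m hCclosed.measurableSet]
  have h0 : R.P {ω | R.φ m ω z ∈ C}ᶜ = 0 := by
    rw [Set.compl_setOf]
    exact ae_iff.mp hae
  exact (prob_compl_eq_zero_iff (R.measurable_hit m z hCclosed.measurableSet)).mp h0

lemma uniform {K : Set X} (hK : IsCompact K)
    (hno : ¬ ∃ C ⊆ K, C.Nonempty ∧ R.FwdInv C) :
    ∃ T : ℕ, ∃ c : ℝ≥0∞, c < 1 ∧ ∀ y ∈ K, ∃ t ≤ T, R.law y t K ≤ c := by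
  have hesc := R.exists_escape hK hno
  have key : ∀ y, y ∈ K → ∃ p : ℕ × ℝ≥0∞, p.2 < 1 ∧ R.law y p.1 K < p.2 := by
    intro y hy
    obtain ⟨t, ht⟩ := hesc y hy
    obtain ⟨c, hc1, hc2⟩ := exists_between ht
    exact ⟨(t, c), hc2, hc1⟩
  choose p hp1 hp2 using key
  have hnhds : ∀ y (hy : y ∈ K), {z : X | R.law z (p y hy).1 K < (p y hy).2} ∈ 𝓝 y := by
    intro y hy
    have hop : IsOpen {z : X | R.law z (p y hy).1 K < (p y hy).2} := by
      have hcl := (R.closed_ge hK.isClosed (p y hy).1 (p y hy).2).isOpen_compl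
      have : {z : X | R.law z (p y hy).1 K < (p y hy).2}
          = {z : X | (p y hy).2 ≤ R.law z (p y hy).1 K}ᶜ := by
        ext z; simp [not_le]
      rw [this]; exact hcl
    exact hop.mem_nhds (hp2 y hy)
  obtain ⟨s, hs⟩ := hK.elim_nhds_subcover'
    (fun y hy => {z : X | R.law z (p y hy).1 K < (p y hy).2}) hnhds
  refine ⟨s.sup (fun y => (p y.1 y.2).1), s.sup (fun y => (p y.1 y.2).2), ?_, ?_⟩
  · refine (Finset.sup_lt_iff (by exact zero_lt_one)).mpr fun y _ => hp1 y.1 y.2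
  · intro z hz
    obtain ⟨y, hys, hzy⟩ := Set.mem_iUnion₂.mp (hs hz)
    refine ⟨(p y.1 y.2).1, Finset.le_sup (f := fun y : ↥K => (p y.1 y.2).1) hys, ?_⟩
    exact le_trans hzy.le (Finset.le_sup (f := fun y : ↥K => (p y.1 y.2).2) hys)

lemma escape_null {K : Set X} (hK : IsCompact K)
    (hno : ¬ ∃ C ⊆ K, C.Nonempty ∧ R.FwdInv C) (x : X) (N : ℕ) :
    R.P {ω | ∀ s, N ≤ s → R.φ s ω x ∈ K} = 0 := by
  haveI := R.hprob
  obtain ⟨T, c, hc1, hunif⟩ := R.uniform hK hno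
  set Sn : ℕ → Set Ω := fun n => {ω | ∀ s, N ≤ s → s ≤ N + n * T → R.φ s ω x ∈ K} with hSndef
  have hSnmeas : ∀ n, MeasurableSet[R.F (N + n * T)] (Sn n) := by
    intro n
    have hrw : Sn n = ⋂ (s : ℕ) (_ : N ≤ s) (_ : s ≤ N + n * T),
        (fun ω : Ω => R.φ s ω x) ⁻¹' K := by
      ext ω; simp [hSndef, Set.mem_iInter]
    rw [hrw]
    refine MeasurableSet.iInter fun s => MeasurableSet.iInter fun _ =>
      MeasurableSet.iInter fun hs => ?_
    exact ((R.measurable_phiPast s x).mono (R.hmono hs) le_rfl) hK.isClosed.measurableSet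
  have hiter : ∀ n, R.P (Sn n) ≤ c ^ n := by
    intro n
    induction n with
    | zero => simpa using prob_le_one
    | succ n ih =>
      have harith : N + (n + 1) * T = N + n * T + T := by rw [Nat.succ_mul, Nat.add_assoc]
      have hstep := R.step x hK.isClosed.measurableSet T c hunif (N + n * T) (Sn n)
        (hSnmeas n) (fun ω hω => hω _ (Nat.le_add_right _ _) le_rfl)
      have hincl : Sn (n + 1) ⊆ Sn n ∩ {ω | ∀ u ≤ T, R.φ (N + n * T + u) ω x ∈ K} := by
        intro ω hω
        constructor
        · intro s h1 h2
          exact hω s h1 (h2.trans (by rw [harith]; exact Nat.le_add_right _ T))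
        · intro u hu
          refine hω _ (le_trans (Nat.le_add_right N _) (Nat.le_add_right _ _)) ?_
          rw [harith]
          exact Nat.add_le_add_left hu _
      calc R.P (Sn (n + 1)) ≤ R.P (Sn n ∩ {ω | ∀ u ≤ T, R.φ (N + n * T + u) ω x ∈ K}) :=
            measure_mono hincl
        _ ≤ c * R.P (Sn n) := hstep
        _ ≤ c * c ^ n := mul_le_mul_right ih c
        _ = c ^ (n + 1) := by rw [pow_succ, mul_comm]
  have hsub : ∀ n, {ω | ∀ s, N ≤ s → R.φ s ω x ∈ K} ⊆ Sn n :=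
    fun n ω hω s h1 _ => hω s h1
  have hle : ∀ n, R.P {ω | ∀ s, N ≤ s → R.φ s ω x ∈ K} ≤ c ^ n :=
    fun n => (measure_mono (hsub n)).trans (hiter n)
  have h0 := ge_of_tendsto' (ENNReal.tendsto_pow_atTop_nhds_zero_of_lt_one hc1) hle
  exact le_antisymm h0 zero_le

end MRDS

end Aux5

/-- If a compact set `K` possesses no non-empty closed forward-invariant subsets, then for
any `x`, almost surely there is an unbounded sequence of times at which the trajectory of
`x` lies outside `K`. -/
theorem stmt3 {Ω X : Type*} [MeasurableSpace Ω] [MetricSpace X] [CompactSpace X]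
    [MeasurableSpace X] [BorelSpace X] (R : MRDS Ω X)
    (K : Set X) (hK : IsCompact K)
    (hno : ¬ ∃ C ⊆ K, C.Nonempty ∧ R.FwdInv C)
    (x : X) :
    ∀ᵐ ω ∂ R.P, ∀ N : ℕ, ∃ t ≥ N, R.φ t ω x ∉ K := by
  haveI := R.hprob
  have hnull : ∀ N : ℕ, R.P {ω | ∀ s, N ≤ s → R.φ s ω x ∈ K} = 0 :=
    fun N => R.escape_null hK hno x N
  rw [MeasureTheory.ae_iff]
  refine measure_mono_null ?_
    (measure_iUnion_null (s := fun N : ℕ => {ω | ∀ s, N ≤ s → R.φ s ω x ∈ K}) hnull)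
  intro ω hω
  simp only [Set.mem_setOf_eq] at hω
  push_neg at hω
  obtain ⟨N, hN⟩ := hω
  exact Set.mem_iUnion.mpr ⟨N, fun s hs => hN s hs⟩
end

section
/- For any open set U ⊂ X, the set E_U of noise realisations ω under which diam(φ(t,ω)U) → 0 as t → ∞ is measurable with respect to F_∞; moreover the set O of asymptotically stable pairs (ω,x) is product-measurable and backward-invariant under the skew-product Θ^t(ω,x) = (θ^t ω, φ(t,ω)x). -/
open MeasureTheory ProbabilityTheory Filter Topology

/-- Diameter of an image as a supremum over the indexing set. -/
private lemma diam_image_eq_iSup {X Y : Type*} [PseudoEMetricSpace Y] (f : X → Y) (s : Set X) :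
    EMetric.diam (f '' s) = ⨆ (x : s) (y : s), edist (f x) (f y) := by
  apply le_antisymm
  · refine EMetric.diam_le_iff.2 ?_
    rintro a ⟨x, hx, rfl⟩ b ⟨y, hy, rfl⟩
    exact le_iSup_of_le ⟨x, hx⟩ (le_iSup_of_le ⟨y, hy⟩ le_rfl)
  · exact iSup_le fun x => iSup_le fun y =>
      EMetric.edist_le_diam_of_mem (Set.mem_image_of_mem f x.2) (Set.mem_image_of_mem f y.2)

/-- The diameter of a continuous image is determined by a dense subset. -/
private lemma diam_image_dense {X Y : Type*} [TopologicalSpace X] [PseudoEMetricSpace Y]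
    {f : X → Y} (hf : Continuous f) {s U : Set X} (hsU : s ⊆ U) (hUs : U ⊆ closure s) :
    EMetric.diam (f '' U) = EMetric.diam (f '' s) := by
  apply le_antisymm
  · calc EMetric.diam (f '' U) ≤ EMetric.diam (f '' closure s) :=
          EMetric.diam_mono (Set.image_mono hUs)
      _ ≤ EMetric.diam (closure (f '' s)) :=
          EMetric.diam_mono (image_closure_subset_closure_image hf)
      _ = EMetric.diam (f '' s) := EMetric.diam_closure _
  · exact EMetric.diam_mono (Set.image_mono hsU)

/-- Measurability of the contraction event, for any jointly measurable continuous cocycle. -/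
private lemma measurableSet_contracts {Ω X : Type*} [MetricSpace X] [CompactSpace X]
    [mX : MeasurableSpace X] [BorelSpace X] [m : MeasurableSpace Ω]
    (φ : ℕ → Ω → X → X) (hc : ∀ t ω, Continuous (φ t ω))
    (hm : ∀ t, Measurable (fun p : Ω × X => φ t p.1 p.2))
    (U : Set X) (hU : IsOpen U) :
    MeasurableSet {ω | Tendsto (fun t => EMetric.diam (φ t ω '' U)) atTop (𝓝 0)} := by
  obtain ⟨D, hDc, hDd⟩ := TopologicalSpace.exists_countable_dense X
  set s : Set X := U ∩ D with hs
  have hcnt : s.Countable := hDc.mono Set.inter_subset_right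
  have hsub : U ⊆ closure s := hDd.open_subset_closure_inter hU
  have key : ∀ t ω, EMetric.diam (φ t ω '' U) = ⨆ (x : s) (y : s), edist (φ t ω x) (φ t ω y) := by
    intro t ω
    rw [diam_image_dense (hc t ω) Set.inter_subset_left hsub, diam_image_eq_iSup]
  have hmeas : ∀ t, Measurable (fun ω => EMetric.diam (φ t ω '' U)) := by
    intro t
    simp only [key]
    haveI := hcnt.to_subtype
    exact Measurable.iSup fun x => Measurable.iSup fun y =>
      ((hm t).comp (measurable_id.prodMk measurable_const)).edist
        ((hm t).comp (measurable_id.prodMk measurable_const))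
  exact measurableSet_tendsto (𝓝 0) hmeas

/-- For any open `U ⊆ X`, the set `E_U` is `F_∞`-measurable; moreover the set `O` of
asymptotically stable pairs is `(F_∞ ⊗ B(X))`-measurable and backward-invariant under the
skew-product `Θ^t(ω,x) = (θ^t ω, φ(t,ω)x)`. -/
theorem stmt6 {Ω X : Type*} [MeasurableSpace Ω] [MetricSpace X] [CompactSpace X]
    [mX : MeasurableSpace X] [BorelSpace X] (R : MRDS Ω X)
    (U : Set X) (hU : IsOpen U) :
    MeasurableSet[⨆ t, R.F t] (R.EU U) ∧
      MeasurableSet[(⨆ t, R.F t).prod mX] R.O ∧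
      ∀ t, (fun p : Ω × X => (R.θ t p.1, R.φ t p.1 p.2)) ⁻¹' R.O ⊆ R.O := by
  have hφm : ∀ t, @Measurable (Ω × X) X ((⨆ t, R.F t).prod mX) mX (fun p => R.φ t p.1 p.2) := by
    intro t
    refine (R.hφmeas t).mono ?_ le_rfl
    exact sup_le_sup (MeasurableSpace.comap_mono (le_iSup R.F t)) le_rfl
  have hEU : ∀ V : Set X, IsOpen V → MeasurableSet[⨆ t, R.F t] (R.EU V) := fun V hV =>
    measurableSet_contracts (m := ⨆ t, R.F t) R.φ R.hφcont hφm V hV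
  have hmono : ∀ (ω : Ω) {A B : Set X}, A ⊆ B → R.contracts ω B → R.contracts ω A := by
    intro ω A B hAB h
    refine tendsto_of_tendsto_of_tendsto_of_le_of_le tendsto_const_nhds h
      (fun t => zero_le) fun t => EMetric.diam_mono (Set.image_mono hAB)
  refine ⟨hEU U hU, ?_, ?_⟩
  · obtain ⟨B, hBc, -, hBB⟩ := TopologicalSpace.exists_countable_basis X
    have hO : R.O = ⋃ V ∈ B, (R.EU V) ×ˢ V := by
      ext ⟨ω, x⟩
      constructor
      · rintro ⟨U', hU', hcon⟩
        obtain ⟨V, hVB, hxV, hVU⟩ := hBB.mem_nhds_iff.1 hU'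
        exact Set.mem_biUnion hVB ⟨hmono ω hVU hcon, hxV⟩
      · intro h
        obtain ⟨V, hVB, hωV, hxV⟩ := Set.mem_iUnion₂.1 h
        exact ⟨V, (hBB.isOpen hVB).mem_nhds hxV, hωV⟩
    rw [hO]
    exact MeasurableSet.biUnion hBc fun V hV =>
      (hEU V (hBB.isOpen hV)).prod (hBB.isOpen hV).measurableSet
  · rintro t ⟨ω, x⟩ hp
    obtain ⟨U', hU', hcon⟩ := hp
    refine ⟨R.φ t ω ⁻¹' U', (R.hφcont t ω).continuousAt.preimage_mem_nhds hU', ?_⟩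
    have key : ∀ s, EMetric.diam (R.φ (s + t) ω '' (R.φ t ω ⁻¹' U')) ≤
        EMetric.diam (R.φ s (R.θ t ω) '' U') := by
      intro s
      refine EMetric.diam_mono ?_
      rw [add_comm, R.hφcocycle t s ω, Set.image_comp]
      exact Set.image_mono (Set.image_preimage_subset _ _)
    have h2 : Tendsto (fun s => EMetric.diam (R.φ (s + t) ω '' (R.φ t ω ⁻¹' U')))
        atTop (𝓝 0) :=
      tendsto_of_tendsto_of_tendsto_of_le_of_le tendsto_const_nhds hcon
        (fun s => zero_le) key
    exact (tendsto_add_atTop_iff_nat t).1 h2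
end

section
/- For a memoryless RDS, the function P_0(x) := P(ω : (ω,x) is asymptotically stable) satisfies the supermartingale-type inequality P_0(x) ≥ ∫ P_0(y) φ_x^t(dy) for all x ∈ X and t ≥ 0; if moreover every map φ(t,ω) is an open mapping, equality holds. -/
open MeasureTheory ProbabilityTheory Filter Topology

namespace MRDS

section Aux

open scoped ENNReal

variable {Ω X : Type*} [mΩ : MeasurableSpace Ω] [MetricSpace X] [CompactSpace X]
  [mX : MeasurableSpace X] [BorelSpace X] (R : MRDS Ω X)

lemma contracts_mono {ω : Ω} {A B : Set X} (h : A ⊆ B) (hB : R.contracts ω B) :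
    R.contracts ω A :=
  tendsto_of_tendsto_of_tendsto_of_le_of_le tendsto_const_nhds hB
    (fun _ => zero_le) (fun s => EMetric.diam_mono (Set.image_mono h))

lemma stablePair_iff {ω : Ω} {x : X} :
    R.stablePair ω x ↔ ∃ n : ℕ, R.contracts ω (Metric.ball x (1 / ((n : ℝ) + 1))) := by
  constructor
  · rintro ⟨U, hU, hc⟩
    obtain ⟨ε, hε, hsub⟩ := Metric.mem_nhds_iff.mp hU
    obtain ⟨n, hn⟩ := exists_nat_one_div_lt hε
    exact ⟨n, R.contracts_mono ((Metric.ball_subset_ball hn.le).trans hsub) hc⟩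
  · rintro ⟨n, hn⟩
    exact ⟨_, Metric.ball_mem_nhds x (by positivity), hn⟩

lemma theta_meas (t : ℕ) : @Measurable Ω Ω mΩ (⨆ u, R.F u) (R.θ t) := by
  rw [measurable_iff_comap_le, MeasurableSpace.comap_iSup, iSup_le_iff]
  intro s
  exact (measurable_iff_comap_le.mp (R.hθmeas s t)).trans (R.hle (s + t))

lemma phi_sec (t : ℕ) (x : X) : @Measurable Ω X (R.F t) mX (fun ω => R.φ t ω x) := by
  have h : @Measurable Ω (Ω × X) (R.F t) ((R.F t).prod mX) (fun ω => (ω, x)) :=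
    Measurable.prodMk measurable_id measurable_const
  exact (R.hφmeas t).comp h

lemma measurable_diam_ball (s : ℕ) (r : ℝ) :
    @Measurable (X × Ω) ℝ≥0∞ (mX.prod (⨆ u, R.F u)) _
      (fun p => EMetric.diam (R.φ s p.2 '' Metric.ball p.1 r)) := by
  obtain ⟨D, Dcount, Ddense⟩ := TopologicalSpace.exists_countable_dense X
  haveI : Countable D := Dcount.to_subtype
  have key : ∀ p : X × Ω, EMetric.diam (R.φ s p.2 '' Metric.ball p.1 r) =
      ⨆ (a : D) (b : D), if dist (a : X) p.1 < r ∧ dist (b : X) p.1 < r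
        then edist (R.φ s p.2 a) (R.φ s p.2 b) else 0 := by
    rintro ⟨x, ω⟩
    dsimp only
    apply le_antisymm
    · have h1 : R.φ s ω '' Metric.ball x r ⊆
          closure (R.φ s ω '' (Metric.ball x r ∩ D)) :=
        (Set.image_mono (Ddense.open_subset_closure_inter Metric.isOpen_ball)).trans
          (image_closure_subset_closure_image (R.hφcont s ω))
      refine ((EMetric.diam_mono h1).trans (EMetric.diam_closure _).le).trans ?_
      refine EMetric.diam_le ?_
      rintro u ⟨a, ⟨haB, haD⟩, rfl⟩ v ⟨b, ⟨hbB, hbD⟩, rfl⟩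
      have hab : edist (R.φ s ω a) (R.φ s ω b) =
          (if dist ((⟨a, haD⟩ : D) : X) x < r ∧ dist ((⟨b, hbD⟩ : D) : X) x < r
            then edist (R.φ s ω ((⟨a, haD⟩ : D) : X)) (R.φ s ω ((⟨b, hbD⟩ : D) : X)) else 0) :=
        (if_pos ⟨Metric.mem_ball.mp haB, Metric.mem_ball.mp hbB⟩).symm
      rw [hab]
      exact le_trans
        (le_iSup (fun b : D => if dist ((⟨a, haD⟩ : D) : X) x < r ∧ dist (b : X) x < r
          then edist (R.φ s ω ((⟨a, haD⟩ : D) : X)) (R.φ s ω (b : X)) else 0) ⟨b, hbD⟩)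
        (le_iSup (fun a : D => ⨆ b : D, if dist (a : X) x < r ∧ dist (b : X) x < r
          then edist (R.φ s ω (a : X)) (R.φ s ω (b : X)) else 0) ⟨a, haD⟩)
    · refine iSup_le fun a => iSup_le fun b => ?_
      split_ifs with h
      · exact EMetric.edist_le_diam_of_mem
          (Set.mem_image_of_mem _ (Metric.mem_ball.mpr h.1))
          (Set.mem_image_of_mem _ (Metric.mem_ball.mpr h.2))
      · exact zero_le
  rw [funext key]
  have hfst : @Measurable (X × Ω) X (mX.prod (⨆ u, R.F u)) mX Prod.fst :=
    @measurable_fst X Ω mX (⨆ u, R.F u)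
  have hsnd : @Measurable (X × Ω) Ω (mX.prod (⨆ u, R.F u)) (⨆ u, R.F u) Prod.snd :=
    @measurable_snd X Ω mX (⨆ u, R.F u)
  refine Measurable.iSup fun a => Measurable.iSup fun b => Measurable.ite ?_ ?_ measurable_const
  · have hda : @Measurable (X × Ω) ℝ (mX.prod (⨆ u, R.F u)) _ (fun p => dist (a : X) p.1) :=
      ((continuous_const.dist continuous_id).measurable).comp hfst
    have hdb : @Measurable (X × Ω) ℝ (mX.prod (⨆ u, R.F u)) _ (fun p => dist (b : X) p.1) :=
      ((continuous_const.dist continuous_id).measurable).comp hfst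
    exact (measurableSet_lt hda measurable_const).inter (measurableSet_lt hdb measurable_const)
  · have ha : @Measurable (X × Ω) X (mX.prod (⨆ u, R.F u)) mX (fun p => R.φ s p.2 (a : X)) :=
      ((R.phi_sec s (a : X)).mono (le_iSup R.F s) le_rfl).comp hsnd
    have hb : @Measurable (X × Ω) X (mX.prod (⨆ u, R.F u)) mX (fun p => R.φ s p.2 (b : X)) :=
      ((R.phi_sec s (b : X)).mono (le_iSup R.F s) le_rfl).comp hsnd
    have hp : @Measurable (X × Ω) (X × X) (mX.prod (⨆ u, R.F u)) _
        (fun p => (R.φ s p.2 (a : X), R.φ s p.2 (b : X))) := Measurable.prodMk ha hb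
    exact continuous_edist.measurable.comp hp

lemma measurableSet_O' :
    MeasurableSet[mX.prod (⨆ u, R.F u)] {p : X × Ω | R.stablePair p.2 p.1} := by
  have hset : {p : X × Ω | R.stablePair p.2 p.1} =
      ⋃ n : ℕ, ⋂ k : ℕ, ⋃ N : ℕ, ⋂ s : ℕ, ⋂ _ : N ≤ s,
        {p : X × Ω |
          EMetric.diam (R.φ s p.2 '' Metric.ball p.1 (1 / ((n : ℝ) + 1))) ≤ ((k : ℝ≥0∞) + 1)⁻¹} := by
    ext ⟨x, ω⟩
    simp only [Set.mem_setOf_eq, Set.mem_iUnion, Set.mem_iInter, R.stablePair_iff]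
    constructor
    · rintro ⟨n, hn⟩
      refine ⟨n, fun k => ?_⟩
      obtain ⟨N, hN⟩ := (ENNReal.tendsto_atTop_zero.mp hn) (((k : ℝ≥0∞) + 1)⁻¹)
        (ENNReal.inv_pos.mpr (by simp))
      exact ⟨N, fun t ht => hN t ht⟩
    · rintro ⟨n, hn⟩
      refine ⟨n, ENNReal.tendsto_atTop_zero.mpr fun ε hε => ?_⟩
      obtain ⟨k, hk⟩ := ENNReal.exists_inv_nat_lt hε.ne'
      obtain ⟨N, hN⟩ := hn k
      have hkk : ((k : ℝ≥0∞) + 1)⁻¹ ≤ ((k : ℝ≥0∞))⁻¹ := by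
        gcongr
        exact le_self_add
      exact ⟨N, fun t ht => ((hN t ht).trans hkk).trans hk.le⟩
  rw [hset]
  refine MeasurableSet.iUnion fun n => MeasurableSet.iInter fun k =>
    MeasurableSet.iUnion fun N => MeasurableSet.iInter fun s => MeasurableSet.iInter fun _ => ?_
  exact R.measurable_diam_ball s (1 / ((n : ℝ) + 1)) measurableSet_Iic

lemma sub_prod_le :
    (mX.prod (⨆ u, R.F u)) ≤ (Prod.instMeasurableSpace : MeasurableSpace (X × Ω)) := by
  show mX.comap Prod.fst ⊔ (⨆ u, R.F u).comap Prod.snd ≤ mX.comap Prod.fst ⊔ mΩ.comap Prod.snd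
  exact sup_le_sup le_rfl (MeasurableSpace.comap_mono (iSup_le R.hle))

lemma pair_meas (x : X) (t : ℕ) :
    @Measurable Ω (X × Ω) mΩ (mX.prod (⨆ u, R.F u)) (fun ω => (R.φ t ω x, R.θ t ω)) :=
  Measurable.prodMk ((R.phi_sec t x).mono (R.hle t) le_rfl) (R.theta_meas t)

lemma fubini (x : X) (t : ℕ) {S : Set (X × Ω)}
    (hS : MeasurableSet[mX.prod (⨆ u, R.F u)] S) :
    R.P ((fun ω => (R.φ t ω x, R.θ t ω)) ⁻¹' S) = (R.law x t).prod R.P S := by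
  haveI := R.hprob
  haveI : IsProbabilityMeasure (R.law x t) :=
    Measure.isProbabilityMeasure_map ((R.phi_sec t x).mono (R.hle t) le_rfl).aemeasurable
  have hgen : (mX.prod (⨆ u, R.F u)) = MeasurableSpace.generateFrom
      (Set.image2 (· ×ˢ ·) {s : Set X | MeasurableSet[mX] s}
        {s : Set Ω | MeasurableSet[⨆ u, R.F u] s}) :=
    (@generateFrom_prod X Ω mX (⨆ u, R.F u)).symm
  refine @MeasurableSpace.induction_on_inter (X × Ω) (mX.prod (⨆ u, R.F u))
    (fun S _ => R.P ((fun ω => (R.φ t ω x, R.θ t ω)) ⁻¹' S) = (R.law x t).prod R.P S)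
    _ hgen (@isPiSystem_prod X Ω mX (⨆ u, R.F u))
    (by simp) ?_ ?_ ?_ S hS
  · -- rectangles
    rintro _ ⟨A, hA, B, hB, rfl⟩
    have hpre : (fun ω => (R.φ t ω x, R.θ t ω)) ⁻¹' (A ×ˢ B) =
        ((fun ω => R.φ t ω x) ⁻¹' A) ∩ (R.θ t ⁻¹' B) := rfl
    have hφA : MeasurableSet[R.F t] ((fun ω => R.φ t ω x) ⁻¹' A) := R.phi_sec t x hA
    have hθB : MeasurableSet[(⨆ u, R.F u).comap (R.θ t)] (R.θ t ⁻¹' B) := ⟨B, hB, rfl⟩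
    have hind := (Indep_iff _ _ _).mp (R.memless t) _ _ hφA hθB
    rw [hpre, hind, Measure.prod_prod]
    congr 1
    · exact (Measure.map_apply ((R.phi_sec t x).mono (R.hle t) le_rfl) hA).symm
    · exact (R.hθpres t).measure_preimage ((iSup_le R.hle) B hB).nullMeasurableSet
  · -- complements
    intro S hSm hC
    have hSamb : MeasurableSet S := R.sub_prod_le S hSm
    have hpre : MeasurableSet ((fun ω => (R.φ t ω x, R.θ t ω)) ⁻¹' S) := R.pair_meas x t hSm
    rw [Set.preimage_compl, measure_compl hpre (measure_ne_top _ _),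
      measure_compl hSamb (measure_ne_top _ _), hC, measure_univ, measure_univ]
  · -- unions
    intro f hdisj hmeas hC
    rw [Set.preimage_iUnion,
      measure_iUnion (fun i j hij => Disjoint.preimage _ (hdisj hij))
        (fun i => R.pair_meas x t (hmeas i)),
      measure_iUnion hdisj (fun i => R.sub_prod_le _ (hmeas i))]
    exact tsum_congr hC

lemma lintegral_stable_eq (x : X) (t : ℕ) :
    ∫⁻ y, R.P {ω | R.stablePair ω y} ∂(R.law x t)
      = R.P {ω | R.stablePair (R.θ t ω) (R.φ t ω x)} := by
  haveI := R.hprob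
  have h1 := R.fubini x t R.measurableSet_O'
  have h2 : MeasurableSet {p : X × Ω | R.stablePair p.2 p.1} :=
    R.sub_prod_le _ R.measurableSet_O'
  rw [Measure.prod_apply h2] at h1
  exact h1.symm

lemma stable_pull {t : ℕ} {ω : Ω} {x : X} (h : R.stablePair (R.θ t ω) (R.φ t ω x)) :
    R.stablePair ω x := by
  obtain ⟨V, hV, hc⟩ := h
  refine ⟨R.φ t ω ⁻¹' V, (R.hφcont t ω).continuousAt.preimage_mem_nhds hV, ?_⟩
  have h2 : ∀ s : ℕ, EMetric.diam (R.φ (s + t) ω '' (R.φ t ω ⁻¹' V))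
      ≤ EMetric.diam (R.φ s (R.θ t ω) '' V) := by
    intro s
    rw [show s + t = t + s from add_comm s t, R.hφcocycle t s ω]
    rw [Set.image_comp]
    exact EMetric.diam_mono (Set.image_mono (Set.image_preimage_subset _ _))
  have h3 : Tendsto (fun s : ℕ =>
      EMetric.diam (R.φ (s + t) ω '' (R.φ t ω ⁻¹' V))) atTop (𝓝 0) :=
    tendsto_of_tendsto_of_tendsto_of_le_of_le tendsto_const_nhds hc (fun _ => zero_le) h2
  exact (tendsto_add_atTop_iff_nat t).mp h3

lemma stable_push (hopen : ∀ t ω, IsOpenMap (R.φ t ω)) {t : ℕ} {ω : Ω} {x : X}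
    (h : R.stablePair ω x) : R.stablePair (R.θ t ω) (R.φ t ω x) := by
  obtain ⟨U, hU, hc⟩ := h
  refine ⟨R.φ t ω '' interior U,
    (hopen t ω _ isOpen_interior).mem_nhds
      (Set.mem_image_of_mem _ (mem_interior_iff_mem_nhds.mpr hU)), ?_⟩
  have h2 : ∀ s : ℕ, EMetric.diam (R.φ s (R.θ t ω) '' (R.φ t ω '' interior U))
      ≤ EMetric.diam (R.φ (s + t) ω '' U) := by
    intro s
    rw [show s + t = t + s from add_comm s t, R.hφcocycle t s ω, Set.image_comp]
    exact EMetric.diam_mono (Set.image_mono (Set.image_mono interior_subset))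
  exact tendsto_of_tendsto_of_tendsto_of_le_of_le tendsto_const_nhds
    ((tendsto_add_atTop_iff_nat t).mpr hc) (fun _ => zero_le) h2

end Aux

end MRDS

/-- The function `P₀(x) = P(ω : (ω,x) asymptotically stable)` satisfies the
supermartingale-type inequality `P₀(x) ≥ ∫ P₀(y) φ_x^t(dy)`; with equality if every map
`φ(t,ω)` is an open mapping. -/
theorem stmt7 {Ω X : Type*} [MeasurableSpace Ω] [MetricSpace X] [CompactSpace X]
    [MeasurableSpace X] [BorelSpace X] (R : MRDS Ω X) :
    (∀ (x : X) (t : ℕ),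
      ∫⁻ y, R.P {ω | R.stablePair ω y} ∂(R.law x t) ≤ R.P {ω | R.stablePair ω x}) ∧
    ((∀ t ω, IsOpenMap (R.φ t ω)) →
      ∀ (x : X) (t : ℕ),
        ∫⁻ y, R.P {ω | R.stablePair ω y} ∂(R.law x t) = R.P {ω | R.stablePair ω x}) := by
  constructor
  · intro x t
    rw [R.lintegral_stable_eq x t]
    exact measure_mono fun ω hω => R.stable_pull hω
  · intro hopen x t
    rw [R.lintegral_stable_eq x t]
    have : {ω | R.stablePair (R.θ t ω) (R.φ t ω x)} = {ω | R.stablePair ω x} :=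
      Set.ext fun ω => ⟨fun h => R.stable_pull h, fun h => R.stable_push hopen h⟩
    rw [this]
end

section
/- Let (D,≤) be a countable totally ordered set and suppose events R_{n,s}, S_{n,s} (n ∈ ℕ, s ∈ D) satisfy: (1) S_{n,s} is independent of σ(R_{n,t} : t ≤ s) for all n,s; (2) P(⋃_{s∈D} R_{n,s}) = 1 for all n; (3) inf_{s∈D} P(S_{n,s}) → 1 as n → ∞. Then P(⋃_n ⋃_{s∈D} (R_{n,s} ∩ S_{n,s})) = 1. -/
open MeasureTheory ProbabilityTheory Filter Topology

/-- Lemma 2.2.15: given events `R_{n,s}`, `S_{n,s}` (`n ∈ ℕ`, `s` in a countable totally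
ordered set `D`) such that `S_{n,s}` is independent of `σ(R_{n,t} : t ≤ s)`,
`P(⋃_s R_{n,s}) = 1` for all `n`, and `inf_s P(S_{n,s}) → 1` as `n → ∞`, we have
`P(⋃_n ⋃_s (R_{n,s} ∩ S_{n,s})) = 1`. -/
theorem stmt10 {Ω : Type*} [MeasurableSpace Ω] (P : Measure Ω) [IsProbabilityMeasure P]
    {D : Type*} [Countable D] [LinearOrder D]
    (R S : ℕ → D → Set Ω)
    (hRmeas : ∀ n s, MeasurableSet (R n s)) (hSmeas : ∀ n s, MeasurableSet (S n s))
    (hindep : ∀ n s, Indep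
      (MeasurableSpace.generateFrom {S n s})
      (MeasurableSpace.generateFrom {A | ∃ t ≤ s, A = R n t}) P)
    (hfull : ∀ n, P (⋃ s : D, R n s) = 1)
    (hinf : Tendsto (fun n => ⨅ s : D, P (S n s)) atTop (𝓝 1)) :
    P (⋃ n : ℕ, ⋃ s : D, R n s ∩ S n s) = 1 := by
  classical
  rcases isEmpty_or_nonempty D with hD | hD
  · have h := hfull 0
    rw [Set.iUnion_of_empty, measure_empty] at h
    exact absurd h zero_ne_one
  obtain ⟨e, he⟩ := exists_surjective_nat D
  have key : ∀ n, (⨅ s : D, P (S n s)) ≤ P (⋃ s : D, R n s ∩ S n s) := by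
    intro n
    set c := ⨅ s : D, P (S n s) with hc
    set F : ℕ → Finset D := fun k => (Finset.range (k + 1)).image e with hF
    set A : ℕ → D → Set Ω := fun k s =>
      R n s \ ⋃ t ∈ (F k).filter (fun t => t < s), R n t with hA
    have hAsub : ∀ k s, A k s ⊆ R n s := fun k s => Set.diff_subset
    have hAnot : ∀ k s t, t ∈ F k → t < s → Disjoint (A k s) (R n t) := by
      intro k s t ht hts
      rw [Set.disjoint_left]
      intro x hxA hx
      exact hxA.2 (Set.mem_biUnion (Finset.mem_filter.2 ⟨ht, hts⟩) hx)
    have hAmeas : ∀ k s, MeasurableSet (A k s) := by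
      intro k s
      exact (hRmeas n s).diff (Finset.measurableSet_biUnion _ fun t _ => hRmeas n t)
    have hAgen : ∀ k s,
        MeasurableSet[MeasurableSpace.generateFrom {A | ∃ t ≤ s, A = R n t}] (A k s) := by
      intro k s
      apply MeasurableSet.diff
      · exact MeasurableSpace.measurableSet_generateFrom ⟨s, le_refl s, rfl⟩
      · exact Finset.measurableSet_biUnion _ fun t ht =>
          MeasurableSpace.measurableSet_generateFrom
            ⟨t, le_of_lt (Finset.mem_filter.1 ht).2, rfl⟩
    have hAdisj : ∀ k, (↑(F k) : Set D).PairwiseDisjoint (A k) := by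
      intro k s hs t ht hst
      rcases hst.lt_or_gt with h | h
      · exact ((hAnot k t s (Finset.mem_coe.1 hs) h).symm).mono (hAsub k s) le_rfl
      · exact (hAnot k s t (Finset.mem_coe.1 ht) h).mono le_rfl (hAsub k t)
    have hcover : ∀ k, ⋃ s ∈ F k, R n s ⊆ ⋃ s ∈ F k, A k s := by
      intro k x hx
      rw [Set.mem_iUnion₂] at hx
      obtain ⟨s, hs, hxs⟩ := hx
      set T := (F k).filter (fun t => x ∈ R n t) with hT
      have hTne : T.Nonempty := ⟨s, Finset.mem_filter.2 ⟨hs, hxs⟩⟩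
      refine Set.mem_iUnion₂.2 ⟨T.min' hTne, (Finset.mem_filter.1 (T.min'_mem hTne)).1, ?_⟩
      refine ⟨(Finset.mem_filter.1 (T.min'_mem hTne)).2, ?_⟩
      intro hmem
      rw [Set.mem_iUnion₂] at hmem
      obtain ⟨t, ht, hxt⟩ := hmem
      obtain ⟨htF, hts⟩ := Finset.mem_filter.1 ht
      exact absurd (T.min'_le t (Finset.mem_filter.2 ⟨htF, hxt⟩)) (not_le.2 hts)
    have hindep' : ∀ k s, P (A k s ∩ S n s) = P (S n s) * P (A k s) := by
      intro k s
      rw [Set.inter_comm]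
      exact (ProbabilityTheory.Indep_iff _ _ _).1 (hindep n s) _ _
        (MeasurableSpace.measurableSet_generateFrom rfl) (hAgen k s)
    have hbound : ∀ k, c * P (⋃ s ∈ F k, R n s) ≤ P (⋃ s : D, R n s ∩ S n s) := by
      intro k
      have hdisj : (↑(F k) : Set D).PairwiseDisjoint (fun s => A k s ∩ S n s) := by
        intro s hs t ht hst
        exact (hAdisj k hs ht hst).mono Set.inter_subset_left Set.inter_subset_left
      calc c * P (⋃ s ∈ F k, R n s)
          ≤ c * P (⋃ s ∈ F k, A k s) := mul_le_mul_right (measure_mono (hcover k)) c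
        _ = c * ∑ s ∈ F k, P (A k s) := by
            rw [measure_biUnion_finset (hAdisj k) (fun s _ => hAmeas k s)]
        _ = ∑ s ∈ F k, c * P (A k s) := Finset.mul_sum _ _ _
        _ ≤ ∑ s ∈ F k, P (S n s) * P (A k s) :=
            Finset.sum_le_sum (fun s _ => mul_le_mul_left (iInf_le _ s) _)
        _ = ∑ s ∈ F k, P (A k s ∩ S n s) :=
            Finset.sum_congr rfl (fun s _ => (hindep' k s).symm)
        _ = P (⋃ s ∈ F k, A k s ∩ S n s) :=
            (measure_biUnion_finset hdisj (fun s _ => (hAmeas k s).inter (hSmeas n s))).symm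
        _ ≤ P (⋃ s : D, R n s ∩ S n s) := by
            apply measure_mono
            exact Set.iUnion₂_subset fun s _ =>
              (Set.inter_subset_inter_left _ (hAsub k s)).trans
                (Set.subset_iUnion (fun s => R n s ∩ S n s) s)
    have hmono : Monotone fun k => ⋃ s ∈ F k, R n s := by
      intro a b hab
      apply Set.biUnion_subset_biUnion_left
      exact Finset.coe_subset.2 (Finset.image_subset_image
        (Finset.range_subset_range.2 (Nat.succ_le_succ hab)))
    have hUnion : ⋃ k, ⋃ s ∈ F k, R n s = ⋃ s : D, R n s := by
      apply Set.Subset.antisymm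
      · exact Set.iUnion_subset fun k => Set.iUnion₂_subset fun s _ => Set.subset_iUnion _ s
      · intro x hx
        rw [Set.mem_iUnion] at hx
        obtain ⟨s, hxs⟩ := hx
        obtain ⟨m, rfl⟩ := he s
        exact Set.mem_iUnion.2 ⟨m, Set.mem_biUnion
          (Finset.mem_image.2 ⟨m, Finset.mem_range.2 (Nat.lt_succ_self m), rfl⟩) hxs⟩
    calc c = c * 1 := (mul_one c).symm
      _ = c * P (⋃ s : D, R n s) := by rw [hfull n]
      _ = c * P (⋃ k, ⋃ s ∈ F k, R n s) := by rw [hUnion]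
      _ = c * ⨆ k, P (⋃ s ∈ F k, R n s) := by
          rw [hmono.directed_le.measure_iUnion]
      _ = ⨆ k, c * P (⋃ s ∈ F k, R n s) := ENNReal.mul_iSup _ _
      _ ≤ P (⋃ s : D, R n s ∩ S n s) := iSup_le hbound
  refine le_antisymm prob_le_one ?_
  exact le_of_tendsto' hinf fun n =>
    (key n).trans (measure_mono (Set.subset_iUnion (fun n => ⋃ s : D, R n s ∩ S n s) n))
end
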